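/- For every T > 0, β₁ > 0, β₂ > 0 and ν ∈ (0, 1/2), there exists ψ ∈ [0, T) such that e^{−β₂ψ} = min{ 1, e^{−β₁(T−ψ) − β₂ψ} + ν/(1−ν) }. (Existence, used implicitly in the paper's Theorem 4, of the equilibrium thresholds ψⁱ* and ψʲ* — taking (β₁,β₂) = (βⁱ,βʲ) for agent i's threshold and (β₁,β₂) = (βʲ,βⁱ) for agent j's threshold — and of the asserted bound ψⁱ*, ψʲ* < T.) -/

import Mathlib

open Real Set

/-- Existence (used implicitly in the paper's Theorem 4) of an equilibrium
time threshold `ψ ∈ [0,T)` solving the fixed-point equation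
`e^{−β₂ψ} = min{1, e^{−β₁(T−ψ) − β₂ψ} + ν/(1−ν)}`. -/
theorem exists_equilibrium_threshold
    (T β₁ β₂ ν : ℝ) (hT : 0 < T) (hβ₁ : 0 < β₁) (hβ₂ : 0 < β₂)
    (hν0 : 0 < ν) (hν1 : ν < 1/2) :
    ∃ ψ ∈ Ico (0:ℝ) T,
      Real.exp (-(β₂ * ψ))
        = min 1 (Real.exp (-(β₁ * (T - ψ)) - β₂ * ψ) + ν / (1 - ν)) := by
  set c : ℝ := ν / (1 - ν) with hc
  have hcpos : 0 < c := div_pos hν0 (by linarith)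
  set g : ℝ → ℝ := fun ψ =>
    min 1 (Real.exp (-(β₁ * (T - ψ)) - β₂ * ψ) + c) - Real.exp (-(β₂ * ψ)) with hg
  have hcont : Continuous g := by
    apply Continuous.sub
    · exact (continuous_const.min (((continuous_const.mul
        (continuous_const.sub continuous_id)).neg.sub
        (continuous_const.mul continuous_id)).rexp.add continuous_const))
    · exact (continuous_const.mul continuous_id).neg.rexp
  have hg0 : g 0 ≤ 0 := by
    simp only [hg]
    have : min 1 (Real.exp (-(β₁ * (T - 0)) - β₂ * 0) + c) ≤ 1 := min_le_left _ _
    simp only [mul_zero, neg_zero] at this ⊢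
    rw [Real.exp_zero]
    linarith
  have hgT : 0 < g T := by
    simp only [hg]
    have h1 : Real.exp (-(β₂ * T)) < 1 := by
      rw [Real.exp_lt_one_iff]
      nlinarith [mul_pos hβ₂ hT]
    have h2 : Real.exp (-(β₂ * T)) < Real.exp (-(β₁ * (T - T)) - β₂ * T) + c := by
      have : -(β₁ * (T - T)) - β₂ * T = -(β₂ * T) := by ring
      rw [this]; linarith
    have := lt_min h1 h2
    linarith
  have := intermediate_value_Icc hT.le hcont.continuousOn
    (mem_Icc.mpr ⟨hg0, hgT.le⟩ : (0:ℝ) ∈ Icc (g 0) (g T))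
  obtain ⟨ψ, hψ, hgψ⟩ := this
  refine ⟨ψ, ⟨hψ.1, lt_of_le_of_ne hψ.2 ?_⟩, by simp only [hg] at hgψ; linarith⟩
  rintro rfl
  simp only [hgψ] at hgT
  exact lt_irrefl 0 (by linarith)
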